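/- The invertibility of R→ in G3iM^w holds as well: if Γ ⇒ φ→ψ is derivable then Γ, φ ⇒ ψ is derivable. -/
import Mathlib


/-- Formulas of intuitionistic (monotone) modal logic over atoms `ℕ`,
with conjunction, disjunction, implication, falsum and a box modality. -/
inductive Fm : Type where
  | atom : ℕ → Fm
  | bot  : Fm
  | and  : Fm → Fm → Fm
  | or   : Fm → Fm → Fm
  | imp  : Fm → Fm → Fm
  | box  : Fm → Fm
deriving DecidableEq

/-- `⊤` as the abbreviation `⊥ → ⊥`. -/
def Fm.top : Fm := Fm.imp Fm.bot Fm.bot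
/-- The sequent calculus `G3iM^w` for intuitionistic monotone modal logic:
single-conclusion sequents with a multiset antecedent. -/
inductive G3 : Multiset Fm → Fm → Prop
  | ax (Γ : Multiset Fm) (p : ℕ) : G3 (Fm.atom p ::ₘ Γ) (Fm.atom p)
  | lbot (Γ : Multiset Fm) (φ : Fm) : G3 (Fm.bot ::ₘ Γ) φ
  | land (Γ : Multiset Fm) (φ ψ θ : Fm) :
      G3 (φ ::ₘ ψ ::ₘ Γ) θ → G3 (φ.and ψ ::ₘ Γ) θ
  | rand (Γ : Multiset Fm) (φ ψ : Fm) : G3 Γ φ → G3 Γ ψ → G3 Γ (φ.and ψ)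
  | lor (Γ : Multiset Fm) (φ ψ θ : Fm) :
      G3 (φ ::ₘ Γ) θ → G3 (ψ ::ₘ Γ) θ → G3 (φ.or ψ ::ₘ Γ) θ
  | ror₁ (Γ : Multiset Fm) (φ ψ : Fm) : G3 Γ φ → G3 Γ (φ.or ψ)
  | ror₂ (Γ : Multiset Fm) (φ ψ : Fm) : G3 Γ ψ → G3 Γ (φ.or ψ)
  | limp (Γ : Multiset Fm) (φ ψ θ : Fm) :
      G3 (φ.imp ψ ::ₘ Γ) φ → G3 (ψ ::ₘ Γ) θ → G3 (φ.imp ψ ::ₘ Γ) θ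
  | rimp (Γ : Multiset Fm) (φ ψ : Fm) : G3 (φ ::ₘ Γ) ψ → G3 Γ (φ.imp ψ)
  | m (Γ : Multiset Fm) (φ ψ : Fm) : G3 {φ} ψ → G3 (φ.box ::ₘ Γ) (ψ.box)

theorem g3_wk (χ : Fm) : ∀ {Γ θ}, G3 Γ θ → G3 (χ ::ₘ Γ) θ := by
  intro Γ θ h
  induction h with
  | ax Γ p => rw [Multiset.cons_swap]; exact G3.ax _ p
  | lbot Γ φ => rw [Multiset.cons_swap]; exact G3.lbot _ _
  | land Γ φ ψ θ h ih =>
      rw [Multiset.cons_swap]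
      refine G3.land _ _ _ _ ?_
      rw [show φ ::ₘ ψ ::ₘ χ ::ₘ Γ = χ ::ₘ φ ::ₘ ψ ::ₘ Γ by
        rw [Multiset.cons_swap ψ χ, Multiset.cons_swap φ χ]]
      exact ih
  | rand Γ φ ψ h1 h2 ih1 ih2 => exact G3.rand _ _ _ ih1 ih2
  | lor Γ φ ψ θ h1 h2 ih1 ih2 =>
      rw [Multiset.cons_swap]
      exact G3.lor _ _ _ _ (by rw [Multiset.cons_swap]; exact ih1)
        (by rw [Multiset.cons_swap]; exact ih2)
  | ror₁ Γ φ ψ h ih => exact G3.ror₁ _ _ _ ih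
  | ror₂ Γ φ ψ h ih => exact G3.ror₂ _ _ _ ih
  | limp Γ φ ψ θ h1 h2 ih1 ih2 =>
      rw [Multiset.cons_swap]
      exact G3.limp _ _ _ _ (by rw [Multiset.cons_swap]; exact ih1)
        (by rw [Multiset.cons_swap]; exact ih2)
  | rimp Γ φ ψ h ih =>
      exact G3.rimp _ _ _ (by rw [Multiset.cons_swap]; exact ih)
  | m Γ φ ψ h ih =>
      rw [Multiset.cons_swap]; exact G3.m _ _ _ h

/-- Invertibility of `R→` in `G3iM^w`. -/
theorem g3_rimp_inversion (Γ : Multiset Fm) (φ ψ : Fm)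
    (h : G3 Γ (φ.imp ψ)) : G3 (φ ::ₘ Γ) ψ := by
  generalize hθ : φ.imp ψ = θ at h
  induction h generalizing φ ψ with
  | ax Γ p => exact absurd hθ (by simp)
  | lbot Γ θ => rw [Multiset.cons_swap]; exact G3.lbot _ _
  | land Γ φ' ψ' θ h ih =>
      rw [Multiset.cons_swap]
      refine G3.land _ _ _ _ ?_
      rw [show φ' ::ₘ ψ' ::ₘ φ ::ₘ Γ = φ ::ₘ φ' ::ₘ ψ' ::ₘ Γ by
        rw [Multiset.cons_swap ψ' φ, Multiset.cons_swap φ' φ]]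
      exact ih φ ψ hθ
  | rand Γ φ' ψ' h1 h2 ih1 ih2 => exact absurd hθ (by simp)
  | lor Γ φ' ψ' θ h1 h2 ih1 ih2 =>
      rw [Multiset.cons_swap]
      exact G3.lor _ _ _ _ (by rw [Multiset.cons_swap]; exact ih1 φ ψ hθ)
        (by rw [Multiset.cons_swap]; exact ih2 φ ψ hθ)
  | ror₁ Γ φ' ψ' h ih => exact absurd hθ (by simp)
  | ror₂ Γ φ' ψ' h ih => exact absurd hθ (by simp)
  | limp Γ φ' ψ' θ h1 h2 ih1 ih2 =>
      rw [Multiset.cons_swap]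
      refine G3.limp _ _ _ _ ?_ ?_
      · rw [Multiset.cons_swap]; exact g3_wk φ h1
      · rw [Multiset.cons_swap]; exact ih2 φ ψ hθ
  | rimp Γ φ' ψ' h ih =>
      obtain ⟨rfl, rfl⟩ : φ = φ' ∧ ψ = ψ' := by
        cases hθ; exact ⟨rfl, rfl⟩
      exact h
  | m Γ φ' ψ' h ih => exact absurd hθ (by simp)
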